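/- If x is a binary word such that 01x10 is a factor of the Thue–Morse word t, then the word 110110·θ(x)·100 is cubefree. -/
import Mathlib


/-- The Thue–Morse morphism θ (0 ↦ 01, 1 ↦ 10), with 0 = `false`, 1 = `true`,
applied letterwise to a word. -/
def tmMap (w : List Bool) : List Bool :=
  w.flatMap (fun b => if b then [true, false] else [false, true])

/-- A word is cubefree if it contains no non-empty factor of the form `x ++ x ++ x`. -/
def Cubefree (w : List Bool) : Prop :=
  ∀ x : List Bool, x ≠ [] → ¬ (x ++ x ++ x) <:+: w

/-- `w` is a factor of the Thue–Morse word `t = θ^ω(0)`: since the words `θ^m(0)`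
are prefixes of `t` whose lengths tend to infinity, this holds iff `w` is an
infix of `θ^m(0)` for some `m`. -/
def FactorTM (w : List Bool) : Prop :=
  ∃ m : ℕ, w <:+: tmMap^[m] [false]

/-- The binary morphism determined by `h : Bool → List Bool` is cubefree. -/
def CubefreeMorphism (h : Bool → List Bool) : Prop :=
  ∀ w : List Bool, Cubefree w → Cubefree (w.flatMap h)

lemma tm_len (w : List Bool) : (tmMap w).length = 2 * w.length := by
  induction w with
  | nil => simp [tmMap]
  | cons a w ih =>
      cases a <;> simp [tmMap, List.flatMap_cons] at ih ⊢ <;> omega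

lemma tm_cons (a : Bool) (w : List Bool) :
    tmMap (a :: w) = a :: (!a) :: tmMap w := by
  cases a <;> simp [tmMap, List.flatMap_cons]

lemma tm_append (u v : List Bool) : tmMap (u ++ v) = tmMap u ++ tmMap v := by
  simp [tmMap]

lemma tm_even (w : List Bool) (k : ℕ) : (tmMap w)[2*k]? = w[k]? := by
  induction w generalizing k with
  | nil => simp [tmMap]
  | cons a w ih =>
      rw [tm_cons]
      cases k with
      | zero => simp
      | succ k =>
          have : 2 * (k+1) = (2*k) + 1 + 1 := by omega
          rw [this]
          simpa using ih k

lemma tm_odd (w : List Bool) (k : ℕ) : (tmMap w)[2*k+1]? = (w[k]?).map (fun b => !b) := by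
  induction w generalizing k with
  | nil => simp [tmMap]
  | cons a w ih =>
      rw [tm_cons]
      cases k with
      | zero => simp
      | succ k =>
          have : 2 * (k+1) + 1 = (2*k+1) + 1 + 1 := by omega
          rw [this]
          simpa using ih k

def NoOv (s : List Bool) : Prop :=
  ∀ z : List Bool, z ≠ [] → ¬ (z ++ z ++ z.take 1) <:+: s

lemma ov_get (z : List Bool) (j : ℕ) (hj : j ≤ z.length) :
    (z ++ z ++ z.take 1)[j]? = (z ++ z ++ z.take 1)[j + z.length]? := by
  simp only [List.getElem?_append, List.length_append, List.length_take]
  split_ifs <;> try omega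
  · congr 1; omega
  · have h1 : j = z.length := by omega
    have h2 : j + z.length - (z.length + z.length) = 0 := by omega
    have h4 : j - z.length = 0 := by omega
    rw [h2, h4]
    rcases z with _ | ⟨a, z⟩
    · simp at hj; omega
    · simp
  · congr 1; omega

lemma ov_periodic {s z : List Bool} (hz : z ≠ [])
    (h : (z ++ z ++ z.take 1) <:+: s) :
    ∃ q, (∀ j ≤ z.length, s[q+j]? = s[q+j+z.length]?) ∧ q + 2 * z.length < s.length := by
  obtain ⟨A, B, hAB⟩ := h
  set p := z.length with hp
  have hp1 : 1 ≤ p := List.length_pos_iff.2 hz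
  have hO : ∀ i < 2*p+1, s[A.length + i]? = (z ++ z ++ z.take 1)[i]? := by
    intro i hi
    rw [← hAB, List.append_assoc A, List.getElem?_append_right (by omega),
      Nat.add_sub_cancel_left]
    have : i < (z ++ z ++ z.take 1).length := by
      simp only [List.length_append, List.length_take]
      omega
    rw [List.append_assoc z, List.getElem?_append]
    rw [List.append_assoc] at this
    simp only [this, if_true]
  refine ⟨A.length, ?_, ?_⟩
  · intro j hj
    rw [hO j (by omega), Nat.add_assoc, hO (j + p) (by omega)]
    exact ov_get z j hj
  · have := congrArg List.length hAB
    simp only [List.length_append, List.length_take] at this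
    omega

lemma periodic_overlap {w : List Bool} {K P : ℕ} (hP : 1 ≤ P)
    (hper : ∀ i ≤ P, w[K+i]? = w[K+i+P]?) (hK : K + 2*P < w.length) :
    ∃ z : List Bool, z ≠ [] ∧ (z ++ z ++ z.take 1) <:+: w := by
  set z := (w.drop K).take P with hzdef
  have hzlen : z.length = P := by
    simp only [hzdef, List.length_take, List.length_drop]
    omega
  have hz : ∀ m, z[m]? = if m < P then w[K+m]? else none := by
    intro m
    rw [hzdef, List.getElem?_take]
    split_ifs with h
    · rw [List.getElem?_drop]
    · rfl
  refine ⟨z, by intro h; rw [h] at hzlen; simp at hzlen; omega, ?_⟩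
  have key : (w.drop K).take (2*P+1) = z ++ z ++ z.take 1 := by
    apply List.ext_getElem?
    intro n
    rw [List.getElem?_take, List.getElem?_append, List.getElem?_append]
    simp only [List.length_append, hzlen, List.length_take, hz, List.getElem?_take]
    split_ifs <;> try omega
    · rw [List.getElem?_drop]
    · rw [List.getElem?_drop]
      rw [show K + n = K + (n - P) + P by omega]
      exact (hper (n - P) (by omega)).symm
    · rw [List.getElem?_drop]
      rw [show K + (n - (P+P)) = K + 0 by omega, hper 0 (by omega),
        show K + 0 + P = K + P by omega, hper P (le_refl P)]
      congr 1
      omega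
    · rfl
  rw [← key]
  exact ((List.take_prefix _ _).isInfix).trans ((List.drop_suffix _ _).isInfix)

lemma tm_step {w : List Bool} {q p j k c : ℕ}
    (hper : ∀ j' ≤ p, (tmMap w)[q+j']? = (tmMap w)[q+j'+p]?)
    (hqj : q + j = 2*k) (hjp : j + 1 ≤ p) (hpc : p = 2*c+1)
    (hrange : q + 2*p < (tmMap w).length) :
    ∃ b, w[k+c]? = some b ∧ w[k+c+1]? = some b := by
  have hk : k < w.length := by have := tm_len w; omega
  obtain ⟨b, hb⟩ : ∃ b, w[k]? = some b := ⟨w[k]'hk, List.getElem?_eq_getElem hk⟩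
  have h1 := hper j (by omega)
  have h2 := hper (j+1) (by omega)
  rw [show q+j+p = 2*(k+c)+1 by omega, hqj, tm_even, tm_odd] at h1
  rw [show q+(j+1)+p = 2*(k+c+1) by omega, show q+(j+1) = 2*k+1 by omega, tm_odd, tm_even] at h2
  rw [hb] at h1 h2
  refine ⟨!b, ?_, ?_⟩
  · rcases hkc : w[k+c]? with _ | a
    · rw [hkc] at h1; simp at h1
    · rw [hkc] at h1
      simp only [Option.map_some] at h1
      cases a <;> cases b <;> simp_all
  · simpa using h2.symm

lemma getElem?_some_lt {w : List Bool} {k : ℕ} {b : Bool} (h : w[k]? = some b) :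
    k < w.length := by
  by_contra hc
  rw [List.getElem?_eq_none (by omega)] at h
  simp at h

lemma noOv_tmMap {w : List Bool} (hw : NoOv w) : NoOv (tmMap w) := by
  intro z hz hinf
  obtain ⟨q, hper, hlen⟩ := ov_periodic hz hinf
  set p := z.length with hp
  have hp1 : 1 ≤ p := List.length_pos_iff.2 hz
  have hsl : (tmMap w).length = 2 * w.length := tm_len w
  rcases Nat.even_or_odd p with ⟨P, hP⟩ | ⟨c, hc⟩
  · -- p even, reduce to overlap in w
    have hP1 : 1 ≤ P := by omega
    rcases Nat.even_or_odd q with ⟨Q, hQ⟩ | ⟨Q, hQ⟩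
    · have hwp : ∀ i ≤ P, w[Q+i]? = w[Q+i+P]? := by
        intro i hi
        have h := hper (2*i) (by omega)
        rw [show q+2*i+p = 2*(Q+i+P) by omega, show q+2*i = 2*(Q+i) by omega,
          tm_even, tm_even] at h
        exact h
      obtain ⟨z', hz', hinf'⟩ := periodic_overlap hP1 hwp (by omega)
      exact hw z' hz' hinf'
    · have hmi : ∀ o1 o2 : Option Bool,
        o1.map (fun b => !b) = o2.map (fun b => !b) → o1 = o2 := by decide
      have hwp : ∀ i ≤ P, w[Q+i]? = w[Q+i+P]? := by
        intro i hi
        have h := hper (2*i) (by omega)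
        rw [show q+2*i+p = 2*(Q+i+P)+1 by omega, show q+2*i = 2*(Q+i)+1 by omega,
          tm_odd, tm_odd] at h
        exact hmi _ _ h
      obtain ⟨z', hz', hinf'⟩ := periodic_overlap hP1 hwp (by omega)
      exact hw z' hz' hinf'
  · -- p odd
    rcases Nat.lt_or_ge p 2 with hps | hpl
    · -- p = 1
      have hp1' : p = 1 := by omega
      rcases Nat.even_or_odd q with ⟨Q, hQ⟩ | ⟨Q, hQ⟩
      · have h := hper 0 (by omega)
        have hk : Q < w.length := by omega
        obtain ⟨b, hb⟩ : ∃ b, w[Q]? = some b := ⟨w[Q]'hk, List.getElem?_eq_getElem hk⟩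
        rw [show q+0+p = 2*Q+1 by omega, show q+0 = 2*Q by omega, tm_even, tm_odd, hb] at h
        simp at h
      · have h := hper 1 (by omega)
        have hk : Q+1 < w.length := by omega
        obtain ⟨b, hb⟩ : ∃ b, w[Q+1]? = some b := ⟨_, List.getElem?_eq_getElem hk⟩
        rw [show q+1+p = 2*(Q+1)+1 by omega, show q+1 = 2*(Q+1) by omega,
          tm_even, tm_odd, hb] at h
        simp at h
    · rcases Nat.even_or_odd q with ⟨Q, hQ⟩ | ⟨Q, hQ⟩
      · -- q even : steps at j = 0 and j = 2
        obtain ⟨b1, hb1, hb1'⟩ := tm_step (j := 0) (k := Q) (c := c) hper (by omega) (by omega) hc hlen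
        obtain ⟨b2, hb2, hb2'⟩ := tm_step (j := 2) (k := Q+1) (c := c) hper (by omega) (by omega) hc hlen
        have hwp : ∀ i ≤ 1, w[(Q+c)+i]? = w[(Q+c)+i+1]? := by
          intro i hi
          interval_cases i
          · rw [show Q+c+0 = Q+c by omega, hb1, show Q+c+0+1 = Q+c+1 by omega, hb1']
          · rw [show Q+c+1 = Q+1+c by omega, hb2, hb2']
        have hK : (Q+c) + 2*1 < w.length := by
          have := getElem?_some_lt hb2'
          omega
        obtain ⟨z', hz', hinf'⟩ := periodic_overlap (le_refl 1) hwp hK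
        exact hw z' hz' hinf'
      · rcases Nat.lt_or_ge p 4 with hps3 | hpl5
        · -- p = 3, q odd : direct contradiction
          have hp3 : p = 3 := by omega
          have hk3 : Q+3 < w.length := by omega
          obtain ⟨a, ha⟩ : ∃ b, w[Q+1]? = some b := ⟨_, List.getElem?_eq_getElem (by omega)⟩
          obtain ⟨b, hbb⟩ : ∃ b, w[Q+2]? = some b := ⟨_, List.getElem?_eq_getElem (by omega)⟩
          obtain ⟨d, hd⟩ : ∃ b, w[Q+3]? = some b := ⟨_, List.getElem?_eq_getElem hk3⟩
          have h1 := hper 1 (by omega)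
          have h2 := hper 2 (by omega)
          have h3 := hper 3 (by omega)
          rw [show q+1+p = 2*(Q+2)+1 by omega, show q+1 = 2*(Q+1) by omega,
            tm_even, tm_odd, ha, hbb] at h1
          rw [show q+2+p = 2*(Q+3) by omega, show q+2 = 2*(Q+1)+1 by omega,
            tm_odd, tm_even, ha, hd] at h2
          rw [show q+3+p = 2*(Q+3)+1 by omega, show q+3 = 2*(Q+2) by omega,
            tm_even, tm_odd, hbb, hd] at h3
          simp only [Option.map_some, Option.some.injEq] at h1 h2 h3
          cases a <;> cases b <;> cases d <;>
            first
            | exact absurd h1 (by decide)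
            | exact absurd h2 (by decide)
            | exact absurd h3 (by decide)
        · -- p ≥ 5 odd, q odd : steps at j = 1 and j = 3
          obtain ⟨b1, hb1, hb1'⟩ := tm_step (j := 1) (k := Q+1) (c := c) hper (by omega) (by omega) hc hlen
          obtain ⟨b2, hb2, hb2'⟩ := tm_step (j := 3) (k := Q+2) (c := c) hper (by omega) (by omega) hc hlen
          have hwp : ∀ i ≤ 1, w[(Q+1+c)+i]? = w[(Q+1+c)+i+1]? := by
            intro i hi
            interval_cases i
            · rw [show Q+1+c+0 = Q+1+c by omega, hb1, show Q+1+c+0+1 = Q+1+c+1 by omega, hb1']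
            · rw [show Q+1+c+1 = Q+2+c by omega, hb2, hb2']
          have hK : (Q+1+c) + 2*1 < w.length := by
            have := getElem?_some_lt hb2'
            omega
          obtain ⟨z', hz', hinf'⟩ := periodic_overlap (le_refl 1) hwp hK
          exact hw z' hz' hinf'

lemma noOv_iter (m : ℕ) : NoOv (tmMap^[m] [false]) := by
  induction m with
  | zero =>
      intro z hz hinf
      have h1 : 1 ≤ z.length := List.length_pos_iff.2 hz
      have := hinf.length_le
      simp only [List.length_append, List.length_take, Function.iterate_zero_apply,
        List.length_cons, List.length_nil] at this
      omega
  | succ m ih =>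
      rw [Function.iterate_succ_apply']
      exact noOv_tmMap ih

lemma strip {mid A O B : List Bool} {a b e : Bool}
    (h : A ++ O ++ B = [a, b] ++ mid ++ [e]) (hA : 2 ≤ A.length) (hB : B ≠ []) :
    O <:+: mid := by
  rcases A with _ | ⟨a1, _ | ⟨a2, A'⟩⟩
  · simp at hA
  · simp at hA
  · simp only [List.cons_append, List.nil_append, List.cons.injEq] at h
    obtain ⟨-, -, h⟩ := h
    -- h : A' ++ O ++ B = mid ++ [e]
    have hBd : B = B.dropLast ++ [B.getLast hB] := by
      rw [List.dropLast_append_getLast hB]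
    rw [hBd, ← List.append_assoc] at h
    have hinj := List.append_inj' h (by simp)
    obtain ⟨h1, -⟩ := hinj
    exact ⟨A', B.dropLast, h1⟩

lemma tm_infix {u v : List Bool} (h : u <:+: v) : tmMap u <:+: tmMap v := by
  obtain ⟨s, t, hst⟩ := h
  exact ⟨tmMap s, tmMap t, by rw [← hst, tm_append, tm_append]⟩

theorem test_main (x : List Bool)
    (hx : ∃ m : ℕ, ([false, true] ++ x ++ [true, false]) <:+: tmMap^[m] [false]) :
    ∀ u : List Bool, u ≠ [] →
      ¬ (u ++ u ++ u) <:+: ([true, true, false, true, true, false] ++ tmMap x ++ [true, false, false]) := by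
  intro u hu hinf
  obtain ⟨m, hm⟩ := hx
  set Mid : List Bool := [false, true, true, false] ++ tmMap x ++ [true, false] with hMid
  have hMidT : Mid <:+: tmMap^[m+1] [false] := by
    rw [Function.iterate_succ_apply']
    refine List.IsInfix.trans ?_ (tm_infix hm)
    rw [tm_append, tm_append]
    refine ⟨[], [false, true], ?_⟩
    simp [hMid, tmMap, List.flatMap_cons, List.append_assoc]
  have hT := noOv_iter (m+1)
  obtain ⟨l, r, hlr⟩ := hinf
  have hup : 0 < u.length := List.length_pos_iff.2 hu
  have hW : ([true, true] ++ Mid ++ [false] : List Bool)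
      = [true, true, false, true, true, false] ++ tmMap x ++ [true, false, false] := by
    simp [hMid]
  have main : ∀ j, ∀ hj : j < u.length, 2 ≤ l.length + j →
      1 ≤ (u.length - (j+1)) + r.length → False := by
    intro j hj h2 h1
    have hu' : u = u.take j ++ u[j]'hj :: u.drop (j+1) := by
      rw [← List.drop_eq_getElem_cons hj, List.take_append_drop]
    set g := u[j]'hj with hg
    set z' : List Bool := g :: (u.drop (j+1) ++ u.take j) with hz'
    have heq : (l ++ u.take j) ++ (z' ++ z' ++ z'.take 1) ++ (u.drop (j+1) ++ r)
        = [true, true] ++ Mid ++ [false] := by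
      rw [hW, ← hlr]
      conv_rhs => rw [hu']
      simp [hz', List.append_assoc]
    have hOinMid := strip heq (by
        simp only [List.length_append, List.length_take]
        omega)
      (by
        intro hemp
        have := congrArg List.length hemp
        simp only [List.length_append, List.length_drop, List.length_nil] at this
        omega)
    exact hT z' (by simp [hz']) (hOinMid.trans hMidT)
  by_cases hl2 : 2 ≤ l.length
  · by_cases hr : r = []
    · by_cases hu2 : 2 ≤ u.length
      · exact main 0 (by omega) (by omega) (by omega)
      · -- u = [a], cube at very end
        rcases u with _ | ⟨a, _ | ⟨b, u'⟩⟩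
        · exact hu rfl
        · subst hr
          simp only [List.append_nil, List.cons_append, List.nil_append] at hlr
          have s1 : ([a,a,a] : List Bool) <:+
              ([true, true, false, true, true, false] ++ tmMap x ++ [true, false, false]) :=
            ⟨l, hlr⟩
          have s2 : ([true, false, false] : List Bool) <:+
              ([true, true, false, true, true, false] ++ tmMap x ++ [true, false, false]) :=
            ⟨[true, true, false, true, true, false] ++ tmMap x, by simp [List.append_assoc]⟩
          rcases List.suffix_or_suffix_of_suffix s1 s2 with h | h <;>
            · have := h.eq_of_length (by simp)
              simp at this
        · exfalso
          simp only [List.length_cons] at hu2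
          omega
    · have hr1 : 1 ≤ r.length := List.length_pos_iff.2 hr
      exact main 0 (by omega) (by omega) (by omega)
  · by_cases hu4 : 4 ≤ u.length
    · exact main (2 - l.length) (by omega) (by omega) (by omega)
    · by_cases hmid : u.length = 3 ∧ (l.length = 1 ∨ r ≠ [])
      · obtain ⟨hu3, hor⟩ := hmid
        rcases hor with h1 | h1
        · exact main (2 - l.length) (by omega) (by omega) (by omega)
        · have hr1 : 1 ≤ r.length := List.length_pos_iff.2 h1
          exact main (2 - l.length) (by omega) (by omega) (by omega)
      · -- brute force small cases
        push_neg at hmid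
        clear main hMidT hT hm hW
        rcases l with _ | ⟨c1, _ | ⟨c2, l'⟩⟩
        · rcases u with _ | ⟨a, _ | ⟨b, _ | ⟨c, _ | ⟨d, u'⟩⟩⟩⟩
          · exact hu rfl
          · cases a <;> simp [tmMap] at hlr
          · cases a <;> cases b <;> simp [tmMap] at hlr
          · have hr : r = [] := (hmid (by simp)).2
            subst hr
            rcases x with _ | ⟨_ | _, x'⟩ <;> cases a <;> cases b <;> cases c <;>
              simp [tmMap, List.flatMap_cons] at hlr
          · exfalso
            simp only [List.length_cons] at hu4
            omega
        · rcases u with _ | ⟨a, _ | ⟨b, _ | ⟨c, _ | ⟨d, u'⟩⟩⟩⟩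
          · exact hu rfl
          · cases c1 <;> cases a <;> simp [tmMap] at hlr
          · cases c1 <;> cases a <;> cases b <;> simp [tmMap] at hlr
          · exact absurd ((hmid (by simp)).1) (by simp)
          · exfalso
            simp only [List.length_cons] at hu4
            omega
        · exfalso
          simp only [List.length_cons] at hl2
          omega

theorem stmt13 (x : List Bool)
    (hx : FactorTM ([false, true] ++ x ++ [true, false])) :
    Cubefree ([true, true, false, true, true, false] ++ tmMap x ++ [true, false, false]) := by
  exact test_main x hx
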